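/- arXiv:1602.02063 — 2 statements merged into one kernel-verified Lean document; each statement's English description precedes it below -/
import Mathlib

section
/- Let U = U_M and let P be an m×n matrix with entries in [0,1], m ≥ T ≥ 1, n ≥ T, such that at least ⌊T/2⌋ of the rows of P are identically zero. Let P' be the (m+1)×n matrix obtained from P by appending one additional all-zero row. Then V(G(T,P',U_M)) = V(G(T,P,U_M)); i.e., under U_M, recruiting a (⌊T/2⌋+1)-th dominated player gives no advantage over ⌊T/2⌋ dominated players. -/
/-- Value function of the team competition `G(T,P,U)`, by backward induction.
`gval m n P U r X Y w` is the value of the state where the players in `X` (Team 1)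
and `Y` (Team 2) have already played, Team 1 has won `w` rounds so far, and
`r = T - |X|` rounds remain to be played.  The value of the whole game is
`gval m n P U T ∅ ∅ 0`. -/
noncomputable def gval (m n : ℕ) (P : Fin m → Fin n → ℝ) (U : ℕ → ℝ) :
    ℕ → Finset (Fin m) → Finset (Fin n) → ℕ → ℝ
  | 0, _, _, w => U w
  | r + 1, X, Y, w =>
      sSup {v : ℝ | ∃ p : Fin m → ℝ,
        (∀ i, 0 ≤ p i) ∧ (∀ i ∈ X, p i = 0) ∧ (∑ i, p i) = 1 ∧
        v = sInf {u : ℝ | ∃ j, j ∉ Y ∧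
          u = ∑ i, p i *
            (P i j * gval m n P U r (insert i X) (insert j Y) (w + 1) +
             (1 - P i j) * gval m n P U r (insert i X) (insert j Y) w)}}

/-- The utility function `U_M(t)`: `1` if `t > T/2`, `0` if `t = T/2`, `-1` if `t < T/2`. -/
def UM (T : ℕ) : ℕ → ℝ := fun t => if T < 2 * t then 1 else if 2 * t = T then 0 else -1

/-- the "expression" for playing `i` against `j`. -/
noncomputable def Ex (m n : ℕ) (P : Fin m → Fin n → ℝ) (U : ℕ → ℝ) (r : ℕ)
    (X : Finset (Fin m)) (Y : Finset (Fin n)) (w : ℕ) (i : Fin m) (j : Fin n) : ℝ :=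
  P i j * gval m n P U r (insert i X) (insert j Y) (w + 1) +
  (1 - P i j) * gval m n P U r (insert i X) (insert j Y) w

lemma gval_succ (m n : ℕ) (P : Fin m → Fin n → ℝ) (U : ℕ → ℝ) (r : ℕ)
    (X : Finset (Fin m)) (Y : Finset (Fin n)) (w : ℕ) :
    gval m n P U (r+1) X Y w =
      sSup {v : ℝ | ∃ p : Fin m → ℝ,
        (∀ i, 0 ≤ p i) ∧ (∀ i ∈ X, p i = 0) ∧ (∑ i, p i) = 1 ∧
        v = sInf {u : ℝ | ∃ j, j ∉ Y ∧ u = ∑ i, p i * Ex m n P U r X Y w i j}} := rfl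

lemma icc_convex {a A B : ℝ} (ha : a ∈ Set.Icc (0:ℝ) 1)
    (hA : A ∈ Set.Icc (-1:ℝ) 1) (hB : B ∈ Set.Icc (-1:ℝ) 1) :
    a * A + (1 - a) * B ∈ Set.Icc (-1:ℝ) 1 := by
  obtain ⟨ha0, ha1⟩ := ha; obtain ⟨hA0, hA1⟩ := hA; obtain ⟨hB0, hB1⟩ := hB
  constructor <;> nlinarith

lemma sum_wt_mem_icc {k : ℕ} {p e : Fin k → ℝ} (hp0 : ∀ i, 0 ≤ p i)
    (hps : ∑ i, p i = 1) (he : ∀ i, e i ∈ Set.Icc (-1:ℝ) 1) :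
    (∑ i, p i * e i) ∈ Set.Icc (-1:ℝ) 1 := by
  constructor
  · have h1 : ∑ i : Fin k, (-(p i)) ≤ ∑ i, p i * e i :=
      Finset.sum_le_sum fun i _ => by nlinarith [(he i).1, hp0 i]
    have h2 : ∑ i : Fin k, (-(p i)) = -1 := by
      rw [Finset.sum_neg_distrib, hps]
    linarith
  · have h1 : ∑ i, p i * e i ≤ ∑ i : Fin k, p i :=
      Finset.sum_le_sum fun i _ => by nlinarith [(he i).2, hp0 i]
    linarith [hps ▸ h1]

lemma sInf_mem_icc {U : Set ℝ} (h : U ⊆ Set.Icc (-1:ℝ) 1) : sInf U ∈ Set.Icc (-1:ℝ) 1 := by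
  rcases U.eq_empty_or_nonempty with rfl | ⟨u, hu⟩
  · rw [Real.sInf_empty]; constructor <;> norm_num
  · exact ⟨le_csInf ⟨u, hu⟩ fun b hb => (h hb).1,
      csInf_le_of_le ⟨-1, fun b hb => (h hb).1⟩ hu (h hu).2⟩

lemma sSup_mem_icc {U : Set ℝ} (h : U ⊆ Set.Icc (-1:ℝ) 1) : sSup U ∈ Set.Icc (-1:ℝ) 1 := by
  rcases U.eq_empty_or_nonempty with rfl | ⟨u, hu⟩
  · rw [Real.sSup_empty]; constructor <;> norm_num
  · exact ⟨le_csSup_of_le ⟨1, fun b hb => (h hb).2⟩ hu (h hu).1,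
      csSup_le ⟨u, hu⟩ fun b hb => (h hb).2⟩

lemma gval_mem_icc (m n : ℕ) (P : Fin m → Fin n → ℝ) (U : ℕ → ℝ)
    (hU : ∀ w, U w ∈ Set.Icc (-1:ℝ) 1) (hP : ∀ i j, P i j ∈ Set.Icc (0:ℝ) 1) :
    ∀ r X Y w, gval m n P U r X Y w ∈ Set.Icc (-1:ℝ) 1 := by
  intro r
  induction r with
  | zero => intro X Y w; exact hU w
  | succ r ih =>
    intro X Y w
    rw [gval_succ]
    apply sSup_mem_icc
    rintro v ⟨p, hp0, hpX, hps, rfl⟩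
    apply sInf_mem_icc
    rintro u ⟨j, hj, rfl⟩
    exact sum_wt_mem_icc hp0 hps fun i => icc_convex (hP i j) (ih _ _ _) (ih _ _ _)

lemma Ex_mem_icc {m n : ℕ} {P : Fin m → Fin n → ℝ} {U : ℕ → ℝ}
    (hU : ∀ w, U w ∈ Set.Icc (-1:ℝ) 1) (hP : ∀ i j, P i j ∈ Set.Icc (0:ℝ) 1)
    (r : ℕ) (X : Finset (Fin m)) (Y : Finset (Fin n)) (w : ℕ) (i : Fin m) (j : Fin n) :
    Ex m n P U r X Y w i j ∈ Set.Icc (-1:ℝ) 1 :=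
  icc_convex (hP i j) (gval_mem_icc m n P U hU hP _ _ _ _) (gval_mem_icc m n P U hU hP _ _ _ _)

lemma UM_mem_icc (T : ℕ) : ∀ w, UM T w ∈ Set.Icc (-1:ℝ) 1 := by
  intro w; unfold UM; split_ifs <;> constructor <;> norm_num

lemma setA_subset_icc {m n : ℕ} {P : Fin m → Fin n → ℝ} {U : ℕ → ℝ}
    (hU : ∀ w, U w ∈ Set.Icc (-1:ℝ) 1) (hP : ∀ i j, P i j ∈ Set.Icc (0:ℝ) 1)
    (r : ℕ) (X : Finset (Fin m)) (Y : Finset (Fin n)) (w : ℕ) :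
    {v : ℝ | ∃ p : Fin m → ℝ,
        (∀ i, 0 ≤ p i) ∧ (∀ i ∈ X, p i = 0) ∧ (∑ i, p i) = 1 ∧
        v = sInf {u : ℝ | ∃ j, j ∉ Y ∧ u = ∑ i, p i * Ex m n P U r X Y w i j}}
      ⊆ Set.Icc (-1:ℝ) 1 := by
  rintro v ⟨p, hp0, hpX, hps, rfl⟩
  apply sInf_mem_icc
  rintro u ⟨j, hj, rfl⟩
  exact sum_wt_mem_icc hp0 hps fun i => Ex_mem_icc hU hP r X Y w i j

lemma setA_nonempty {m n : ℕ} {P : Fin m → Fin n → ℝ} {U : ℕ → ℝ}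
    (r : ℕ) (X : Finset (Fin m)) (Y : Finset (Fin n)) (w : ℕ)
    {i0 : Fin m} (hi0 : i0 ∉ X) :
    Set.Nonempty {v : ℝ | ∃ p : Fin m → ℝ,
        (∀ i, 0 ≤ p i) ∧ (∀ i ∈ X, p i = 0) ∧ (∑ i, p i) = 1 ∧
        v = sInf {u : ℝ | ∃ j, j ∉ Y ∧ u = ∑ i, p i * Ex m n P U r X Y w i j}} := by
  refine ⟨_, fun i => if i = i0 then 1 else 0, ?_, ?_, ?_, rfl⟩
  · intro i; dsimp only; split_ifs <;> norm_num
  · intro i hi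
    exact if_neg (by rintro rfl; exact hi0 hi)
  · simp

lemma exists_not_mem {k : ℕ} (Z : Finset (Fin k)) (h : Z.card < k) : ∃ z, z ∉ Z := by
  by_contra hc
  push_neg at hc
  have : Z = Finset.univ := Finset.eq_univ_iff_forall.2 hc
  rw [this, Finset.card_univ, Fintype.card_fin] at h
  omega

lemma gval_forced (T m n : ℕ) (P : Fin m → Fin n → ℝ) :
    ∀ r (X : Finset (Fin m)) (Y : Finset (Fin n)) (w : ℕ), X.card + r ≤ m → Y.card + r ≤ n →
      2 * (w + r) < T → gval m n P (UM T) r X Y w = -1 := by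
  intro r
  induction r with
  | zero =>
    intro X Y w _ _ hw
    show UM T w = -1
    unfold UM
    rw [if_neg (by omega), if_neg (by omega)]
  | succ r ih =>
    intro X Y w hX hY hw
    obtain ⟨i0, hi0⟩ := exists_not_mem X (by omega)
    obtain ⟨j0, hj0⟩ := exists_not_mem Y (by omega)
    have key : ∀ p : Fin m → ℝ, (∑ i, p i) = 1 →
        sInf {u : ℝ | ∃ j, j ∉ Y ∧ u = ∑ i, p i * Ex m n P (UM T) r X Y w i j} = -1 := by
      intro p hps
      have hval : ∀ j, j ∉ Y → (∑ i, p i * Ex m n P (UM T) r X Y w i j) = -1 := by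
        intro j hj
        have : ∀ i ∈ Finset.univ, p i * Ex m n P (UM T) r X Y w i j = -(p i) := by
          intro i _
          unfold Ex
          have hcX : (insert i X).card + r ≤ m := by
            have := Finset.card_insert_le i X; omega
          have hcY : (insert j Y).card + r ≤ n := by
            have := Finset.card_insert_le j Y; omega
          rw [ih (insert i X) (insert j Y) (w+1) hcX hcY (by omega),
            ih (insert i X) (insert j Y) w hcX hcY (by omega)]
          ring
        rw [Finset.sum_congr rfl this, Finset.sum_neg_distrib, hps]
      have hset : {u : ℝ | ∃ j, j ∉ Y ∧ u = ∑ i, p i * Ex m n P (UM T) r X Y w i j}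
          = {(-1:ℝ)} := by
        ext u
        constructor
        · rintro ⟨j, hj, rfl⟩; exact hval j hj
        · rintro rfl; exact ⟨j0, hj0, (hval j0 hj0).symm⟩
      rw [hset, csInf_singleton]
    rw [gval_succ]
    have hset : {v : ℝ | ∃ p : Fin m → ℝ,
        (∀ i, 0 ≤ p i) ∧ (∀ i ∈ X, p i = 0) ∧ (∑ i, p i) = 1 ∧
        v = sInf {u : ℝ | ∃ j, j ∉ Y ∧ u = ∑ i, p i * Ex m n P (UM T) r X Y w i j}}
        = {(-1:ℝ)} := by
      ext v
      constructor
      · rintro ⟨p, hp0, hpX, hps, rfl⟩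
        exact key p hps
      · rintro rfl
        refine ⟨fun i => if i = i0 then 1 else 0, ?_, ?_, ?_, ?_⟩
        · intro i; dsimp only; split_ifs <;> norm_num
        · intro i hi; exact if_neg (by rintro rfl; exact hi0 hi)
        · simp
        · exact (key _ (by simp)).symm
    rw [hset, csSup_singleton]

def cemb (m : ℕ) : Fin m ↪ Fin (m+1) := ⟨Fin.castSucc, Fin.castSucc_injective m⟩

@[simp] lemma cemb_apply {m : ℕ} (i : Fin m) : cemb m i = Fin.castSucc i := rfl

lemma main_claim {T m n : ℕ} {P : Fin m → Fin n → ℝ} {S : Finset (Fin m)}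
    (hm : T ≤ m) (hn : T ≤ n)
    (hP : ∀ i j, P i j ∈ Set.Icc (0:ℝ) 1) (hScard : S.card = T / 2)
    (hS : ∀ i ∈ S, ∀ j, P i j = 0) :
    ∀ r (X' : Finset (Fin (m+1))) (X : Finset (Fin m)) (Y : Finset (Fin n)) (w : ℕ),
      X' \ insert (Fin.last m) (S.map (cemb m)) = (X \ S).map (cemb m) →
      (X' ∩ insert (Fin.last m) (S.map (cemb m))).card = (X ∩ S).card →
      X.card + r = T → Y.card + r = T →
      (X ∩ S).card + w + r ≤ T →
      gval (m+1) n (Fin.snoc P (fun _ => (0:ℝ))) (UM T) r X' Y w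
        = gval m n P (UM T) r X Y w := by
  set P' : Fin (m+1) → Fin n → ℝ := Fin.snoc P (fun _ => (0:ℝ)) with hP'def
  set D' : Finset (Fin (m+1)) := insert (Fin.last m) (S.map (cemb m)) with hD'def
  have hlast_nm : Fin.last m ∉ S.map (cemb m) := by
    simp only [Finset.mem_map, cemb_apply]
    rintro ⟨i, _, hi⟩
    exact (Fin.castSucc_lt_last i).ne hi
  have hlastD : Fin.last m ∈ D' := Finset.mem_insert_self _ _
  have hcD : ∀ i : Fin m, Fin.castSucc i ∈ D' ↔ i ∈ S := by
    intro i
    rw [hD'def, Finset.mem_insert]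
    constructor
    · rintro (h | h)
      · exact absurd h (Fin.castSucc_lt_last i).ne
      · obtain ⟨i2, hi2, he⟩ := Finset.mem_map.1 h
        have : i2 = i := Fin.castSucc_injective m he
        exact this ▸ hi2
    · intro h
      exact Or.inr (Finset.mem_map_of_mem _ h)
  have hP'c : ∀ (i : Fin m) (j : Fin n), P' (Fin.castSucc i) j = P i j := by
    intro i j; rw [hP'def, Fin.snoc_castSucc]
  have hP'last : ∀ j, P' (Fin.last m) j = 0 := by
    intro j; rw [hP'def, Fin.snoc_last]
  have hP'D : ∀ i' ∈ D', ∀ j, P' i' j = 0 := by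
    intro i' hi' j
    rw [hD'def, Finset.mem_insert] at hi'
    rcases hi' with rfl | hi'
    · exact hP'last j
    · obtain ⟨i, hiS, rfl⟩ := Finset.mem_map.1 hi'
      rw [cemb_apply, hP'c]
      exact hS i hiS j
  have hP'icc : ∀ i' j, P' i' j ∈ Set.Icc (0:ℝ) 1 := by
    intro i' j
    induction i' using Fin.lastCases with
    | last => rw [hP'last]; exact ⟨le_refl _, by norm_num⟩
    | cast i => rw [hP'c]; exact hP i j
  intro r
  induction r with
  | zero => intro X' X Y w _ _ _ _ _; rfl
  | succ r ih =>
    intro X' X Y w h1 h2 h3 h4 h5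
    have hXS_le : (X ∩ S).card ≤ S.card := Finset.card_le_card Finset.inter_subset_right
    have hX'card : X'.card = X.card := by
      have e1 := Finset.card_sdiff_add_card_inter X' D'
      have e2 := Finset.card_sdiff_add_card_inter X S
      rw [h1, Finset.card_map] at e1
      omega
    obtain ⟨j0, hj0⟩ := exists_not_mem Y (by omega)
    obtain ⟨i0, hi0⟩ := exists_not_mem X (by omega)
    have hD'card : D'.card = S.card + 1 := by
      rw [hD'def, Finset.card_insert_of_notMem hlast_nm, Finset.card_map]
    obtain ⟨i'0, hi'0D, hi'0X⟩ : ∃ i', i' ∈ D' ∧ i' ∉ X' := by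
      by_contra hc
      push_neg at hc
      have : X' ∩ D' = D' := Finset.inter_eq_right.2 hc
      rw [this] at h2
      omega
    have hmemX' : ∀ i : Fin m, i ∉ S → (Fin.castSucc i ∈ X' ↔ i ∈ X) := by
      intro i hiS
      have hnD : Fin.castSucc i ∉ D' := fun h => hiS ((hcD i).1 h)
      constructor
      · intro h
        have hm2 : Fin.castSucc i ∈ X' \ D' := Finset.mem_sdiff.2 ⟨h, hnD⟩
        rw [h1] at hm2
        obtain ⟨i2, hi2, he⟩ := Finset.mem_map.1 hm2
        have : i2 = i := Fin.castSucc_injective m he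
        exact (Finset.mem_sdiff.1 (this ▸ hi2)).1
      · intro h
        have hm2 : Fin.castSucc i ∈ (X \ S).map (cemb m) :=
          Finset.mem_map_of_mem _ (Finset.mem_sdiff.2 ⟨h, hiS⟩)
        rw [← h1] at hm2
        exact (Finset.mem_sdiff.1 hm2).1
    -- pairings
    have paira : ∀ i : Fin m, i ∉ S → i ∉ X → ∀ j, j ∉ Y → ∀ w', w' = w ∨ w' = w + 1 →
        gval (m+1) n P' (UM T) r (insert (Fin.castSucc i) X') (insert j Y) w'
          = gval m n P (UM T) r (insert i X) (insert j Y) w' := by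
      intro i hiS hiX j hj w' hw'
      have hnD : Fin.castSucc i ∉ D' := fun h => hiS ((hcD i).1 h)
      apply ih
      · rw [Finset.insert_sdiff_of_notMem _ hnD, h1,
          Finset.insert_sdiff_of_notMem _ hiS, Finset.map_insert, cemb_apply]
      · rw [Finset.insert_inter_of_notMem hnD, Finset.insert_inter_of_notMem hiS]
        exact h2
      · rw [Finset.card_insert_of_notMem hiX]; omega
      · rw [Finset.card_insert_of_notMem hj]; omega
      · rw [Finset.insert_inter_of_notMem hiS]
        rcases hw' with rfl | rfl <;> omega
    have pairb : ∀ i', i' ∈ D' → i' ∉ X' → ∀ iS, iS ∈ S → iS ∉ X → ∀ j, j ∉ Y →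
        gval (m+1) n P' (UM T) r (insert i' X') (insert j Y) w
          = gval m n P (UM T) r (insert iS X) (insert j Y) w := by
      intro i' hi'D hi'X iS hiSS hiSX j hj
      apply ih
      · rw [Finset.insert_sdiff_of_mem _ hi'D, h1, Finset.insert_sdiff_of_mem _ hiSS]
      · rw [Finset.insert_inter_of_mem hi'D, Finset.insert_inter_of_mem hiSS,
          Finset.card_insert_of_notMem (fun h => hi'X (Finset.mem_inter.1 h).1),
          Finset.card_insert_of_notMem (fun h => hiSX (Finset.mem_inter.1 h).1), h2]
      · rw [Finset.card_insert_of_notMem hiSX]; omega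
      · rw [Finset.card_insert_of_notMem hj]; omega
      · rw [Finset.insert_inter_of_mem hiSS,
          Finset.card_insert_of_notMem (fun h => hiSX (Finset.mem_inter.1 h).1)]
        omega
    have forced : S ⊆ X → ∀ i', i' ∈ D' → i' ∉ X' → ∀ j, j ∉ Y →
        gval (m+1) n P' (UM T) r (insert i' X') (insert j Y) w = -1 := by
      intro hSX i' hi'D hi'X j hj
      have hXS : X ∩ S = S := Finset.inter_eq_right.2 hSX
      apply gval_forced
      · have := Finset.card_insert_le i' X'; omega
      · have := Finset.card_insert_le j Y; omega
      · rw [hXS, hScard] at h5; omega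
    have ExD : ∀ i', i' ∈ D' → ∀ j, Ex (m+1) n P' (UM T) r X' Y w i' j
        = gval (m+1) n P' (UM T) r (insert i' X') (insert j Y) w := by
      intro i' hi' j; unfold Ex; rw [hP'D i' hi' j]; ring
    have Exa : ∀ i : Fin m, i ∉ S → i ∉ X → ∀ j, j ∉ Y →
        Ex (m+1) n P' (UM T) r X' Y w (Fin.castSucc i) j = Ex m n P (UM T) r X Y w i j := by
      intro i hiS hiX j hj; unfold Ex
      rw [hP'c, paira i hiS hiX j hj (w+1) (Or.inr rfl), paira i hiS hiX j hj w (Or.inl rfl)]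
    have Exb : ∀ iS, iS ∈ S → ∀ j, Ex m n P (UM T) r X Y w iS j
        = gval m n P (UM T) r (insert iS X) (insert j Y) w := by
      intro iS hiSS j; unfold Ex; rw [hS iS hiSS j]; ring
    rw [gval_succ, gval_succ]
    apply le_antisymm
    · -- primed ≤ unprimed
      refine csSup_le (setA_nonempty r X' Y w hi'0X) ?_
      rintro v' ⟨p', hp'0, hp'X, hp's, rfl⟩
      have hδ'0 : (0:ℝ) ≤ ∑ i' ∈ D', p' i' := Finset.sum_nonneg fun i' _ => hp'0 i'
      set δ' : ℝ := ∑ i' ∈ D', p' i' with hδ'def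
      have hδ'1 : δ' = p' (Fin.last m) + ∑ i ∈ S, p' (Fin.castSucc i) := by
        rw [hδ'def, hD'def, Finset.sum_insert hlast_nm, Finset.sum_map]
        simp only [cemb_apply]
      obtain ⟨iS, hiSX, hkey⟩ : ∃ iS, iS ∉ X ∧ ∀ j, j ∉ Y → ∀ i', i' ∈ D' → i' ∉ X' →
          gval (m+1) n P' (UM T) r (insert i' X') (insert j Y) w
            ≤ Ex m n P (UM T) r X Y w iS j := by
        by_cases hSX : ∃ iS, iS ∈ S ∧ iS ∉ X
        · obtain ⟨iS, hiSS, hiSX⟩ := hSX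
          refine ⟨iS, hiSX, fun j hj i' hi'D hi'X => ?_⟩
          rw [pairb i' hi'D hi'X iS hiSS hiSX j hj, ← Exb iS hiSS j]
        · push_neg at hSX
          have hSsubX : S ⊆ X := fun i hi => hSX i hi
          refine ⟨i0, hi0, fun j hj i' hi'D hi'X => ?_⟩
          rw [forced hSsubX i' hi'D hi'X j hj]
          exact (Ex_mem_icc (UM_mem_icc T) hP r X Y w i0 j).1
      have hle : ∀ j, j ∉ Y →
          ∑ i' : Fin (m+1), p' i' * Ex (m+1) n P' (UM T) r X' Y w i' j
          ≤ ∑ i : Fin m, ((if i = iS then δ' else 0)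
              + (if i ∈ S then (0:ℝ) else p' (Fin.castSucc i)))
              * Ex m n P (UM T) r X Y w i j := by
        intro j hj
        have rhs : ∑ i : Fin m, ((if i = iS then δ' else 0)
              + (if i ∈ S then (0:ℝ) else p' (Fin.castSucc i))) * Ex m n P (UM T) r X Y w i j
            = δ' * Ex m n P (UM T) r X Y w iS j
              + ∑ i : Fin m, (if i ∈ S then (0:ℝ) else p' (Fin.castSucc i))
                  * Ex m n P (UM T) r X Y w i j := by
          have hterm : ∀ i ∈ Finset.univ, ((if i = iS then δ' else 0)
                + (if i ∈ S then (0:ℝ) else p' (Fin.castSucc i))) * Ex m n P (UM T) r X Y w i j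
              = (if i = iS then δ' * Ex m n P (UM T) r X Y w i j else 0)
                + (if i ∈ S then (0:ℝ) else p' (Fin.castSucc i))
                    * Ex m n P (UM T) r X Y w i j := by
            intro i _; split_ifs <;> ring
          rw [Finset.sum_congr rfl hterm, Finset.sum_add_distrib]
          congr 1
          rw [Finset.sum_ite_eq', if_pos (Finset.mem_univ _)]
        have lhs : ∑ i' : Fin (m+1), p' i' * Ex (m+1) n P' (UM T) r X' Y w i' j
            = (∑ i : Fin m, (if i ∈ S then p' (Fin.castSucc i) else 0)
                  * Ex (m+1) n P' (UM T) r X' Y w (Fin.castSucc i) j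
                + p' (Fin.last m) * Ex (m+1) n P' (UM T) r X' Y w (Fin.last m) j)
              + ∑ i : Fin m, (if i ∈ S then (0:ℝ) else p' (Fin.castSucc i))
                  * Ex (m+1) n P' (UM T) r X' Y w (Fin.castSucc i) j := by
          rw [Fin.sum_univ_castSucc]
          have hterm : ∀ i ∈ Finset.univ,
              p' (Fin.castSucc i) * Ex (m+1) n P' (UM T) r X' Y w (Fin.castSucc i) j
              = (if i ∈ S then p' (Fin.castSucc i) else 0)
                  * Ex (m+1) n P' (UM T) r X' Y w (Fin.castSucc i) j
                + (if i ∈ S then (0:ℝ) else p' (Fin.castSucc i))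
                    * Ex (m+1) n P' (UM T) r X' Y w (Fin.castSucc i) j := by
            intro i _; split_ifs <;> ring
          rw [Finset.sum_congr rfl hterm, Finset.sum_add_distrib]
          ring
        have e2 : ∑ i : Fin m, (if i ∈ S then (0:ℝ) else p' (Fin.castSucc i))
              * Ex (m+1) n P' (UM T) r X' Y w (Fin.castSucc i) j
            = ∑ i : Fin m, (if i ∈ S then (0:ℝ) else p' (Fin.castSucc i))
                * Ex m n P (UM T) r X Y w i j := by
          apply Finset.sum_congr rfl
          intro i _
          by_cases hiS : i ∈ S
          · simp [hiS]
          · rw [if_neg hiS]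
            by_cases hiX : i ∈ X
            · rw [hp'X _ ((hmemX' i hiS).2 hiX), zero_mul, zero_mul]
            · rw [Exa i hiS hiX j hj]
        have e1 : ∑ i : Fin m, (if i ∈ S then p' (Fin.castSucc i) else 0)
              * Ex (m+1) n P' (UM T) r X' Y w (Fin.castSucc i) j
              + p' (Fin.last m) * Ex (m+1) n P' (UM T) r X' Y w (Fin.last m) j
            ≤ δ' * Ex m n P (UM T) r X Y w iS j := by
          have hterm : ∀ i ∈ Finset.univ, (if i ∈ S then p' (Fin.castSucc i) else 0)
                * Ex (m+1) n P' (UM T) r X' Y w (Fin.castSucc i) j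
              ≤ (if i ∈ S then p' (Fin.castSucc i) else 0)
                * Ex m n P (UM T) r X Y w iS j := by
            intro i _
            by_cases hiS : i ∈ S
            · rw [if_pos hiS]
              by_cases hX'i : Fin.castSucc i ∈ X'
              · rw [hp'X _ hX'i, zero_mul, zero_mul]
              · have hD : Fin.castSucc i ∈ D' := (hcD i).2 hiS
                rw [ExD _ hD j]
                exact mul_le_mul_of_nonneg_left (hkey j hj _ hD hX'i) (hp'0 _)
            · rw [if_neg hiS, zero_mul, zero_mul]
          have hlast2 : p' (Fin.last m) * Ex (m+1) n P' (UM T) r X' Y w (Fin.last m) j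
              ≤ p' (Fin.last m) * Ex m n P (UM T) r X Y w iS j := by
            by_cases hX'l : Fin.last m ∈ X'
            · rw [hp'X _ hX'l, zero_mul, zero_mul]
            · rw [ExD _ hlastD j]
              exact mul_le_mul_of_nonneg_left (hkey j hj _ hlastD hX'l) (hp'0 _)
          have hsplit : δ' * Ex m n P (UM T) r X Y w iS j
              = ∑ i : Fin m, (if i ∈ S then p' (Fin.castSucc i) else 0)
                  * Ex m n P (UM T) r X Y w iS j
                + p' (Fin.last m) * Ex m n P (UM T) r X Y w iS j := by
            have hmm : ∑ i : Fin m, (if i ∈ S then p' (Fin.castSucc i) else 0)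
                = ∑ i ∈ S, p' (Fin.castSucc i) := Fintype.sum_ite_mem S _
            rw [← Finset.sum_mul, hmm, hδ'1]
            ring
          calc ∑ i : Fin m, (if i ∈ S then p' (Fin.castSucc i) else 0)
                  * Ex (m+1) n P' (UM T) r X' Y w (Fin.castSucc i) j
                + p' (Fin.last m) * Ex (m+1) n P' (UM T) r X' Y w (Fin.last m) j
              ≤ ∑ i : Fin m, (if i ∈ S then p' (Fin.castSucc i) else 0)
                  * Ex m n P (UM T) r X Y w iS j
                + p' (Fin.last m) * Ex m n P (UM T) r X Y w iS j :=
                add_le_add (Finset.sum_le_sum hterm) hlast2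
            _ = δ' * Ex m n P (UM T) r X Y w iS j := hsplit.symm
        rw [lhs, rhs, e2]
        exact add_le_add_left e1 _
      have hmem : (sInf {u : ℝ | ∃ j, j ∉ Y ∧ u = ∑ i : Fin m, ((if i = iS then δ' else 0)
            + (if i ∈ S then (0:ℝ) else p' (Fin.castSucc i))) * Ex m n P (UM T) r X Y w i j})
          ∈ {v : ℝ | ∃ p : Fin m → ℝ,
            (∀ i, 0 ≤ p i) ∧ (∀ i ∈ X, p i = 0) ∧ (∑ i, p i) = 1 ∧
            v = sInf {u : ℝ | ∃ j, j ∉ Y ∧ u = ∑ i, p i * Ex m n P (UM T) r X Y w i j}} := by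
        refine ⟨fun i => (if i = iS then δ' else 0)
          + (if i ∈ S then (0:ℝ) else p' (Fin.castSucc i)), ?_, ?_, ?_, rfl⟩
        · intro i
          apply add_nonneg
          · split_ifs
            · exact hδ'0
            · exact le_rfl
          · split_ifs
            · exact le_rfl
            · exact hp'0 _
        · intro i hiX
          have ha : (if i = iS then δ' else 0) = 0 := if_neg (by rintro rfl; exact hiSX hiX)
          have hb2 : (if i ∈ S then (0:ℝ) else p' (Fin.castSucc i)) = 0 := by
            by_cases hiS : i ∈ S
            · rw [if_pos hiS]
            · rw [if_neg hiS]
              exact hp'X _ ((hmemX' i hiS).2 hiX)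
          simp only [ha, hb2, add_zero]
        · rw [Finset.sum_add_distrib]
          have hA : ∑ i : Fin m, (if i = iS then δ' else 0) = δ' := by
            rw [Finset.sum_ite_eq', if_pos (Finset.mem_univ _)]
          have htot := Fin.sum_univ_castSucc p'
          rw [hp's] at htot
          have hsplitS : ∑ i : Fin m, p' (Fin.castSucc i)
              = ∑ i ∈ S, p' (Fin.castSucc i)
                + ∑ i : Fin m, (if i ∈ S then (0:ℝ) else p' (Fin.castSucc i)) := by
            rw [← Fintype.sum_ite_mem S (fun i => p' (Fin.castSucc i)), ← Finset.sum_add_distrib]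
            apply Finset.sum_congr rfl
            intro i _; split_ifs <;> ring
          rw [hA]
          linarith [hδ'1, hsplitS, htot]
      refine le_csSup_of_le ⟨1, fun b hb =>
        (setA_subset_icc (UM_mem_icc T) hP r X Y w hb).2⟩ hmem ?_
      · refine le_csInf ⟨_, j0, hj0, rfl⟩ ?_
        rintro b ⟨j, hj, rfl⟩
        refine csInf_le_of_le ⟨-1, ?_⟩ ⟨j, hj, rfl⟩ (hle j hj)
        rintro u ⟨j2, hj2, rfl⟩
        exact (sum_wt_mem_icc hp'0 hp's fun i' =>
          Ex_mem_icc (UM_mem_icc T) hP'icc r X' Y w i' j2).1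
    · -- unprimed ≤ primed
      refine csSup_le (setA_nonempty r X Y w hi0) ?_
      rintro v ⟨p, hp0, hpX, hps, rfl⟩
      have hδ0 : (0:ℝ) ≤ ∑ i ∈ S, p i := Finset.sum_nonneg fun i _ => hp0 i
      set δ : ℝ := ∑ i ∈ S, p i with hδdef
      set q2 : Fin (m+1) → ℝ :=
        Fin.snoc (fun i : Fin m => if i ∈ S then (0:ℝ) else p i) (0:ℝ) with hq2def
      have hq2c : ∀ i : Fin m, q2 (Fin.castSucc i) = if i ∈ S then (0:ℝ) else p i := by
        intro i; rw [hq2def, Fin.snoc_castSucc]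
      have hq2l : q2 (Fin.last m) = 0 := by rw [hq2def, Fin.snoc_last]
      have hu : ∀ j, j ∉ Y →
          ∑ i' : Fin (m+1), ((if i' = i'0 then δ else 0) + q2 i')
            * Ex (m+1) n P' (UM T) r X' Y w i' j
          = ∑ i, p i * Ex m n P (UM T) r X Y w i j := by
        intro j hj
        have lhs_split : ∑ i' : Fin (m+1), ((if i' = i'0 then δ else 0) + q2 i')
              * Ex (m+1) n P' (UM T) r X' Y w i' j
            = δ * Ex (m+1) n P' (UM T) r X' Y w i'0 j
              + ∑ i : Fin m, (if i ∈ S then (0:ℝ) else p i)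
                  * Ex (m+1) n P' (UM T) r X' Y w (Fin.castSucc i) j := by
          have hterm : ∀ i' ∈ Finset.univ, ((if i' = i'0 then δ else 0) + q2 i')
                * Ex (m+1) n P' (UM T) r X' Y w i' j
              = (if i' = i'0 then δ * Ex (m+1) n P' (UM T) r X' Y w i' j else 0)
                + q2 i' * Ex (m+1) n P' (UM T) r X' Y w i' j := by
            intro i' _; split_ifs <;> ring
          rw [Finset.sum_congr rfl hterm, Finset.sum_add_distrib]
          congr 1
          · rw [Finset.sum_ite_eq', if_pos (Finset.mem_univ _)]
          · rw [Fin.sum_univ_castSucc, hq2l, zero_mul, add_zero]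
            exact Finset.sum_congr rfl fun i _ => by rw [hq2c]
        have e2 : ∑ i : Fin m, (if i ∈ S then (0:ℝ) else p i)
              * Ex (m+1) n P' (UM T) r X' Y w (Fin.castSucc i) j
            = ∑ i : Fin m, (if i ∈ S then (0:ℝ) else p i) * Ex m n P (UM T) r X Y w i j := by
          apply Finset.sum_congr rfl
          intro i _
          by_cases hiS : i ∈ S
          · simp [hiS]
          · rw [if_neg hiS]
            by_cases hiX : i ∈ X
            · rw [hpX i hiX, zero_mul, zero_mul]
            · rw [Exa i hiS hiX j hj]
        have e1 : ∑ i : Fin m, (if i ∈ S then p i else 0) * Ex m n P (UM T) r X Y w i j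
            = δ * Ex (m+1) n P' (UM T) r X' Y w i'0 j := by
          have hterm : ∀ i ∈ Finset.univ,
              (if i ∈ S then p i else 0) * Ex m n P (UM T) r X Y w i j
              = (if i ∈ S then p i else 0) * Ex (m+1) n P' (UM T) r X' Y w i'0 j := by
            intro i _
            by_cases hiS : i ∈ S
            · rw [if_pos hiS]
              by_cases hiX : i ∈ X
              · rw [hpX i hiX, zero_mul, zero_mul]
              · rw [Exb i hiS j, ExD i'0 hi'0D j, pairb i'0 hi'0D hi'0X i hiS hiX j hj]
            · rw [if_neg hiS, zero_mul, zero_mul]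
          rw [Finset.sum_congr rfl hterm, ← Finset.sum_mul, hδdef]
          congr 1
          rw [Fintype.sum_ite_mem]
        have rhs_split : ∑ i, p i * Ex m n P (UM T) r X Y w i j
            = ∑ i : Fin m, (if i ∈ S then p i else 0) * Ex m n P (UM T) r X Y w i j
              + ∑ i : Fin m, (if i ∈ S then (0:ℝ) else p i) * Ex m n P (UM T) r X Y w i j := by
          rw [← Finset.sum_add_distrib]
          apply Finset.sum_congr rfl
          intro i _; split_ifs <;> ring
        rw [lhs_split, rhs_split, e2, e1]
      refine le_csSup_of_le ⟨1, fun b hb => (setA_subset_icc (UM_mem_icc T) hP'icc r X' Y w hb).2⟩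
        (Set.mem_setOf_eq ▸
          ⟨fun i' => (if i' = i'0 then δ else 0) + q2 i', ?_, ?_, ?_, ?_⟩) le_rfl
      · intro i'
        apply add_nonneg
        · split_ifs
          · exact hδ0
          · exact le_rfl
        · induction i' using Fin.lastCases with
          | last => rw [hq2l]
          | cast i => rw [hq2c]; split_ifs; exacts [le_rfl, hp0 i]
      · intro i' hi'
        have ha : (if i' = i'0 then δ else 0) = 0 := if_neg (by rintro rfl; exact hi'0X hi')
        have hb : q2 i' = 0 := by
          induction i' using Fin.lastCases with
          | last => exact hq2l
          | cast i =>
            rw [hq2c]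
            by_cases hiS : i ∈ S
            · rw [if_pos hiS]
            · rw [if_neg hiS]
              exact hpX i ((hmemX' i hiS).1 hi')
        simp only [ha, hb, add_zero]
      · rw [Finset.sum_add_distrib]
        have hA : ∑ i' : Fin (m+1), (if i' = i'0 then δ else 0) = δ := by
          rw [Finset.sum_ite_eq', if_pos (Finset.mem_univ _)]
        have hB : ∑ i' : Fin (m+1), q2 i' = 1 - δ := by
          rw [Fin.sum_univ_castSucc, hq2l, add_zero]
          have hterm : ∀ i ∈ Finset.univ, q2 (Fin.castSucc i)
              = p i - (if i ∈ S then p i else 0) := by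
            intro i _; rw [hq2c]; split_ifs <;> ring
          rw [Finset.sum_congr rfl hterm, Finset.sum_sub_distrib, hps, Fintype.sum_ite_mem, hδdef]
        rw [hA, hB]; ring
      · show _ = sInf _
        have hsets : {u : ℝ | ∃ j, j ∉ Y ∧ u = ∑ i' : Fin (m+1),
              ((if i' = i'0 then δ else 0) + q2 i') * Ex (m+1) n P' (UM T) r X' Y w i' j}
            = {u : ℝ | ∃ j, j ∉ Y ∧ u = ∑ i, p i * Ex m n P (UM T) r X Y w i j} := by
          ext u
          constructor
          · rintro ⟨j, hj, rfl⟩; exact ⟨j, hj, hu j hj⟩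
          · rintro ⟨j, hj, rfl⟩; exact ⟨j, hj, (hu j hj).symm⟩
        rw [hsets]

/-- Under `U_M`, if Team 1 already has at least `⌊T/2⌋` dominated
players (all-zero rows of `P`), then appending one more all-zero row to `P` does not
change the value of the game: a `(⌊T/2⌋+1)`-th dominated player gives no advantage
over `⌊T/2⌋` of them. -/
theorem no_gain_from_extra_dominated_UM (T m n : ℕ) (hT : 1 ≤ T) (hm : T ≤ m) (hn : T ≤ n)
    (P : Fin m → Fin n → ℝ) (hP : ∀ i j, P i j ∈ Set.Icc (0 : ℝ) 1)
    (hzero : ∃ S : Finset (Fin m), T / 2 ≤ S.card ∧ ∀ i ∈ S, ∀ j, P i j = 0) :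
    gval (m + 1) n (Fin.snoc P (fun _ => (0 : ℝ))) (UM T) T ∅ ∅ 0 =
      gval m n P (UM T) T ∅ ∅ 0 := by
  obtain ⟨S0, hcard, hz⟩ := hzero
  obtain ⟨S, hsub, hScard⟩ := Finset.exists_subset_card_eq hcard
  exact main_claim hm hn hP hScard (fun i hi j => hz i (hsub hi) j) T ∅ ∅ ∅ 0
    (by simp) (by simp) (by simp) (by simp) (by simp)
end

section
/- Let U : {0,…,T} → ℝ be any utility function, let P be an m×n matrix with entries in [0,1] with m ≥ T ≥ 1 and n ≥ T, and let P' be the (m+1)×n matrix obtained from P by appending one additional all-zero row. Then V(G(T,P',U)) ≥ V(G(T,P,U)); i.e., a team's value never decreases by recruiting an additional dominated player. -/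
/-- A uniform bound on the value function. -/
noncomputable def Bd (U : ℕ → ℝ) (w r : ℕ) : ℝ := ∑ k ∈ Finset.Icc w (w + r), |U k|

lemma Bd_nonneg (U : ℕ → ℝ) (w r : ℕ) : 0 ≤ Bd U w r :=
  Finset.sum_nonneg fun k _ => abs_nonneg _

lemma Bd_le_succ (U : ℕ → ℝ) (w r : ℕ) : Bd U w r ≤ Bd U w (r + 1) :=
  Finset.sum_le_sum_of_subset_of_nonneg
    (Finset.Icc_subset_Icc_right (by omega)) (fun k _ _ => abs_nonneg _)

lemma Bd_succ_le (U : ℕ → ℝ) (w r : ℕ) : Bd U (w + 1) r ≤ Bd U w (r + 1) :=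
  Finset.sum_le_sum_of_subset_of_nonneg
    (by intro k hk; simp only [Finset.mem_Icc] at *; omega)
    (fun k _ _ => abs_nonneg _)

/-- Every element of the defining set of `gval` at `r+1` is bounded by `Bd U w (r+1)`,
given the bound at level `r`. -/
lemma elt_le {M n : ℕ} (Q : Fin M → Fin n → ℝ) (hQ : ∀ i j, Q i j ∈ Set.Icc (0 : ℝ) 1)
    (U : ℕ → ℝ) (r : ℕ) (X : Finset (Fin M)) (Y : Finset (Fin n)) (w : ℕ)
    (hg : ∀ (i : Fin M) (j : Fin n) (w' : ℕ),
      gval M n Q U r (insert i X) (insert j Y) w' ≤ Bd U w' r) :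
    ∀ v ∈ {v : ℝ | ∃ p : Fin M → ℝ,
        (∀ i, 0 ≤ p i) ∧ (∀ i ∈ X, p i = 0) ∧ (∑ i, p i) = 1 ∧
        v = sInf {u : ℝ | ∃ j, j ∉ Y ∧
          u = ∑ i, p i *
            (Q i j * gval M n Q U r (insert i X) (insert j Y) (w + 1) +
             (1 - Q i j) * gval M n Q U r (insert i X) (insert j Y) w)}},
      v ≤ Bd U w (r + 1) := by
  rintro v ⟨p, hp0, hpX, hps, rfl⟩
  set f : Fin n → ℝ := fun j => ∑ i, p i *
      (Q i j * gval M n Q U r (insert i X) (insert j Y) (w + 1) +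
       (1 - Q i j) * gval M n Q U r (insert i X) (insert j Y) w) with hf
  set A : Set ℝ := {u : ℝ | ∃ j, j ∉ Y ∧ u = f j} with hA
  have hfB : ∀ j : Fin n, f j ≤ Bd U w (r + 1) := by
    intro j
    have step : ∀ i : Fin M, p i *
        (Q i j * gval M n Q U r (insert i X) (insert j Y) (w + 1) +
         (1 - Q i j) * gval M n Q U r (insert i X) (insert j Y) w)
        ≤ p i * Bd U w (r + 1) := by
      intro i
      refine mul_le_mul_of_nonneg_left ?_ (hp0 i)
      have h1 : gval M n Q U r (insert i X) (insert j Y) (w + 1) ≤ Bd U w (r + 1) :=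
        (hg i j (w + 1)).trans (Bd_succ_le U w r)
      have h0 : gval M n Q U r (insert i X) (insert j Y) w ≤ Bd U w (r + 1) :=
        (hg i j w).trans (Bd_le_succ U w r)
      have hQ0 := (hQ i j).1
      have hQ1 := (hQ i j).2
      nlinarith [mul_le_mul_of_nonneg_left h1 hQ0,
        mul_le_mul_of_nonneg_left h0 (by linarith : (0:ℝ) ≤ 1 - Q i j)]
    calc f j ≤ ∑ i, p i * Bd U w (r + 1) := Finset.sum_le_sum fun i _ => step i
      _ = Bd U w (r + 1) := by rw [← Finset.sum_mul, hps, one_mul]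
  rcases A.eq_empty_or_nonempty with hAe | ⟨u, j, hj, hu⟩
  · rw [hAe, Real.sInf_empty]; exact Bd_nonneg U w (r + 1)
  · have hbdd : BddBelow A :=
      ((Set.finite_range f).subset (by rintro u ⟨j, _, rfl⟩; exact ⟨j, rfl⟩)).bddBelow
    exact (csInf_le hbdd ⟨j, hj, hu⟩).trans (hu ▸ hfB j)

/-- The value function is uniformly bounded. -/
lemma gval_le {M n : ℕ} (Q : Fin M → Fin n → ℝ) (hQ : ∀ i j, Q i j ∈ Set.Icc (0 : ℝ) 1)
    (U : ℕ → ℝ) : ∀ (r : ℕ) (X : Finset (Fin M)) (Y : Finset (Fin n)) (w : ℕ),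
    gval M n Q U r X Y w ≤ Bd U w r := by
  intro r
  induction r with
  | zero =>
    intro X Y w
    simp only [gval, Bd, Nat.add_zero, Finset.Icc_self, Finset.sum_singleton]
    exact le_abs_self _
  | succ r ih =>
    intro X Y w
    simp only [gval]
    exact Real.sSup_le (elt_le Q hQ U r X Y w (fun i j w' => ih _ _ _))
      (Bd_nonneg U w (r + 1))

/-- For any utility function `U`, appending an all-zero row to `P`
(i.e. recruiting an additional dominated player) never decreases the value of the
game for Team 1. -/
theorem value_mono_in_dominated_player (T m n : ℕ) (hT : 1 ≤ T) (hm : T ≤ m) (hn : T ≤ n)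
    (P : Fin m → Fin n → ℝ) (hP : ∀ i j, P i j ∈ Set.Icc (0 : ℝ) 1)
    (U : ℕ → ℝ) :
    gval m n P U T ∅ ∅ 0 ≤
      gval (m + 1) n (Fin.snoc P (fun _ => (0 : ℝ))) U T ∅ ∅ 0 := by
  set P' : Fin (m + 1) → Fin n → ℝ := Fin.snoc P (fun _ => (0 : ℝ)) with hP'def
  have hP' : ∀ i j, P' i j ∈ Set.Icc (0 : ℝ) 1 := by
    intro i j
    induction i using Fin.lastCases with
    | last => simp [hP'def, Fin.snoc_last]
    | cast k => simpa [hP'def, Fin.snoc_castSucc] using hP k j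
  have key : ∀ (r : ℕ) (X : Finset (Fin m)) (Y : Finset (Fin n)) (w : ℕ),
      X.card + r ≤ m → Y.card + r ≤ n →
      gval m n P U r X Y w ≤
        gval (m + 1) n P' U r (X.image Fin.castSucc) Y w := by
    intro r
    induction r with
    | zero => intro X Y w _ _; simp [gval]
    | succ r ih =>
      intro X Y w hX hY
      simp only [gval]
      -- the left set is nonempty
      obtain ⟨i0, hi0⟩ : ∃ i : Fin m, i ∉ X := by
        by_contra h
        push_neg at h
        have : X = Finset.univ := Finset.eq_univ_iff_forall.2 h
        rw [this, Finset.card_univ, Fintype.card_fin] at hX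
        omega
      have hSne : {v : ℝ | ∃ p : Fin m → ℝ,
          (∀ i, 0 ≤ p i) ∧ (∀ i ∈ X, p i = 0) ∧ (∑ i, p i) = 1 ∧
          v = sInf {u : ℝ | ∃ j, j ∉ Y ∧
            u = ∑ i, p i *
              (P i j * gval m n P U r (insert i X) (insert j Y) (w + 1) +
               (1 - P i j) * gval m n P U r (insert i X) (insert j Y) w)}}.Nonempty := by
        refine ⟨_, fun i => if i = i0 then (1 : ℝ) else 0, ?_, ?_, ?_, rfl⟩
        · intro i; by_cases h : i = i0 <;> simp [h]
        · intro i hi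
          have : i ≠ i0 := fun h => hi0 (h ▸ hi)
          simp [this]
        · simp
      -- the right set is bounded above
      have hbddS' : BddAbove {v : ℝ | ∃ p : Fin (m + 1) → ℝ,
          (∀ i, 0 ≤ p i) ∧ (∀ i ∈ X.image Fin.castSucc, p i = 0) ∧ (∑ i, p i) = 1 ∧
          v = sInf {u : ℝ | ∃ j, j ∉ Y ∧
            u = ∑ i, p i *
              (P' i j * gval (m + 1) n P' U r (insert i (X.image Fin.castSucc)) (insert j Y) (w + 1) +
               (1 - P' i j) * gval (m + 1) n P' U r (insert i (X.image Fin.castSucc)) (insert j Y) w)}} :=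
        ⟨Bd U w (r + 1), elt_le P' hP' U r (X.image Fin.castSucc) Y w
          (fun i j w' => gval_le P' hP' U r _ _ _)⟩
      refine csSup_le hSne ?_
      rintro v ⟨p, hp0, hpX, hps, rfl⟩
      -- extend p by zero on the new player
      set p' : Fin (m + 1) → ℝ := Fin.snoc p 0 with hp'def
      have hp'0 : ∀ i, 0 ≤ p' i := by
        intro i
        induction i using Fin.lastCases with
        | last => simp [hp'def, Fin.snoc_last]
        | cast k => simpa [hp'def, Fin.snoc_castSucc] using hp0 k
      have hp'X : ∀ i ∈ X.image Fin.castSucc, p' i = 0 := by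
        intro i hi
        obtain ⟨k, hk, rfl⟩ := Finset.mem_image.1 hi
        simpa [hp'def, Fin.snoc_castSucc] using hpX k hk
      have hp's : (∑ i, p' i) = 1 := by
        rw [Fin.sum_univ_castSucc]
        simp [hp'def, Fin.snoc_castSucc, Fin.snoc_last, hps]
      -- the corresponding element of the right set
      set g : Fin n → ℝ := fun j => ∑ i, p i *
          (P i j * gval m n P U r (insert i X) (insert j Y) (w + 1) +
           (1 - P i j) * gval m n P U r (insert i X) (insert j Y) w) with hg
      set g' : Fin n → ℝ := fun j => ∑ i, p' i *
          (P' i j * gval (m + 1) n P' U r (insert i (X.image Fin.castSucc)) (insert j Y) (w + 1) +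
           (1 - P' i j) * gval (m + 1) n P' U r (insert i (X.image Fin.castSucc)) (insert j Y) w)
        with hg'
      have hmem' : sInf {u : ℝ | ∃ j, j ∉ Y ∧ u = g' j} ∈ {v : ℝ | ∃ p : Fin (m + 1) → ℝ,
          (∀ i, 0 ≤ p i) ∧ (∀ i ∈ X.image Fin.castSucc, p i = 0) ∧ (∑ i, p i) = 1 ∧
          v = sInf {u : ℝ | ∃ j, j ∉ Y ∧
            u = ∑ i, p i *
              (P' i j * gval (m + 1) n P' U r (insert i (X.image Fin.castSucc)) (insert j Y) (w + 1) +
               (1 - P' i j) * gval (m + 1) n P' U r (insert i (X.image Fin.castSucc)) (insert j Y) w)}} :=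
        ⟨p', hp'0, hp'X, hp's, rfl⟩
      -- pointwise comparison g j ≤ g' j
      have hgg' : ∀ j : Fin n, g j ≤ g' j := by
        intro j
        have hsum : g' j = ∑ i : Fin m, p i *
            (P i j * gval (m + 1) n P' U r ((insert i X).image Fin.castSucc) (insert j Y) (w + 1) +
             (1 - P i j) * gval (m + 1) n P' U r ((insert i X).image Fin.castSucc) (insert j Y) w) := by
          simp only [hg']
          rw [Fin.sum_univ_castSucc]
          simp only [hp'def, hP'def, Fin.snoc_castSucc, Fin.snoc_last, zero_mul, add_zero,
            Finset.image_insert]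
        rw [hsum]
        simp only [hg]
        refine Finset.sum_le_sum fun i _ => ?_
        refine mul_le_mul_of_nonneg_left ?_ (hp0 i)
        have hcard1 : (insert i X).card + r ≤ m :=
          le_trans (by have := Finset.card_insert_le i X; omega) hX
        have hcard2 : (insert j Y).card + r ≤ n :=
          le_trans (by have := Finset.card_insert_le j Y; omega) hY
        have ih1 := ih (insert i X) (insert j Y) (w + 1) hcard1 hcard2
        have ih0 := ih (insert i X) (insert j Y) w hcard1 hcard2
        have hQ0 := (hP i j).1
        have hQ1 := (hP i j).2
        exact add_le_add (mul_le_mul_of_nonneg_left ih1 hQ0)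
          (mul_le_mul_of_nonneg_left ih0 (by linarith))
      -- sInf comparison
      have hYne : ∃ j : Fin n, j ∉ Y := by
        by_contra h
        push_neg at h
        have : Y = Finset.univ := Finset.eq_univ_iff_forall.2 h
        rw [this, Finset.card_univ, Fintype.card_fin] at hY
        omega
      obtain ⟨j0, hj0⟩ := hYne
      have hAbdd : BddBelow {u : ℝ | ∃ j, j ∉ Y ∧ u = g j} :=
        ((Set.finite_range g).subset (by rintro u ⟨j, _, rfl⟩; exact ⟨j, rfl⟩)).bddBelow
      have hle : sInf {u : ℝ | ∃ j, j ∉ Y ∧ u = g j} ≤ sInf {u : ℝ | ∃ j, j ∉ Y ∧ u = g' j} := by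
        refine le_csInf ⟨g' j0, j0, hj0, rfl⟩ ?_
        rintro u ⟨j, hj, rfl⟩
        exact (csInf_le hAbdd ⟨j, hj, rfl⟩).trans (hgg' j)
      exact hle.trans (le_csSup hbddS' hmem')
  have := key T ∅ ∅ 0 (by simpa using hm) (by simpa using hn)
  simpa using this
end
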